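/- For every countably infinite locally finite group G, there exists a family 𝔉 of subsets of G with |𝔉| = 2^ℵ₀ such that any two distinct members of 𝔉 are not coarsely equivalent as subsets of G. -/

import Mathlib

open Pointwise
open scoped Classical

/-- The ball `B_X(x, F) = ((F·x) ∪ {x}) ∩ X` in a subset `X` of a group `G`. -/
def ballIn {G : Type*} [Group G] (X : Set G) (F : Finset G) (x : G) : Set G :=
  ((F : Set G) * {x} ∪ {x}) ∩ X

/-- A bijection `f : X ≃ X'` between subsets of a group `G` is an asymorphism if
it is coarse in both directions. -/
def IsAsymorphism {G : Type*} [Group G] (X X' : Set G) (f : X ≃ X') : Prop :=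
  (∀ F : Finset G, ∃ F' : Finset G, ∀ x y : X,
      (y : G) ∈ (F : Set G) * {(x : G)} ∪ {(x : G)} →
      (f y : G) ∈ (F' : Set G) * {(f x : G)} ∪ {(f x : G)}) ∧
  (∀ F : Finset G, ∃ F' : Finset G, ∀ x y : X',
      (y : G) ∈ (F : Set G) * {(x : G)} ∪ {(x : G)} →
      (f.symm y : G) ∈ (F' : Set G) * {(f.symm x : G)} ∪ {(f.symm x : G)})

/-- `Y` is a large subset of `X` (subsets of a group `G`). -/
def LargeIn {G : Type*} [Group G] (Y X : Set G) : Prop :=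
  Y ⊆ X ∧ ∃ F : Finset G, X ⊆ (F : Set G) * Y ∪ Y

/-- Subsets `X, X'` of a group `G` are coarsely equivalent if some large subsets
of each are asymorphic. -/
def CoarselyEquiv {G : Type*} [Group G] (X X' : Set G) : Prop :=
  ∃ Y Y' : Set G, LargeIn Y X ∧ LargeIn Y' X' ∧ ∃ f : Y ≃ Y', IsAsymorphism Y Y' f


namespace CC

variable {G : Type*} [Group G]

lemma ratio_ball {F : Finset G} {a y : G} (h : y * a⁻¹ ∈ (F : Set G)) :
    y ∈ (F : Set G) * {a} ∪ {a} := by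
  refine Or.inl ?_
  rw [Set.mem_mul]
  exact ⟨y * a⁻¹, h, a, Set.mem_singleton a, by group⟩

lemma ball_ratio {F : Finset G} {a y : G} (h : y ∈ (F : Set G) * {a} ∪ {a}) :
    y = a ∨ y * a⁻¹ ∈ (F : Set G) := by
  rcases h with h | h
  · rw [Set.mem_mul] at h
    obtain ⟨g, hg, b, hb, heq⟩ := h
    rcases Set.mem_singleton_iff.1 hb
    right
    rw [← heq]
    simpa using hg
  · left; exact h

lemma ball_mono {F F' : Finset G} (h : F ⊆ F') {a y : G}
    (hy : y ∈ (F : Set G) * {a} ∪ {a}) : y ∈ (F' : Set G) * {a} ∪ {a} := by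
  rcases hy with hy | hy
  · exact Or.inl (Set.mul_subset_mul_right (by exact_mod_cast h) hy)
  · exact Or.inr hy

/-- One-sided closedness of `C` inside `Z` at scale `F`. -/
def Closed (Z : Set G) (F : Finset G) (C : Set G) : Prop :=
  C ⊆ Z ∧ ∀ x ∈ C, ∀ y ∈ Z, y ∈ (F : Set G) * {x} ∪ {x} → y ∈ C

def comp (Z : Set G) (F : Finset G) (x : G) : Set G :=
  ⋂₀ {C | Closed Z F C ∧ x ∈ C}

lemma closed_self (Z : Set G) (F : Finset G) : Closed Z F Z :=
  ⟨le_refl _, fun _ _ y hy _ => hy⟩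

lemma comp_subset {Z : Set G} {F : Finset G} {x : G} (hx : x ∈ Z) :
    comp Z F x ⊆ Z :=
  Set.sInter_subset_of_mem ⟨closed_self Z F, hx⟩

lemma mem_comp_self {Z : Set G} {F : Finset G} {x : G} (hx : x ∈ Z) :
    x ∈ comp Z F x :=
  Set.mem_sInter.2 fun _ hC => hC.2

lemma comp_min {Z : Set G} {F : Finset G} {x : G} {C : Set G}
    (hC : Closed Z F C) (hx : x ∈ C) : comp Z F x ⊆ C :=
  Set.sInter_subset_of_mem ⟨hC, hx⟩

lemma comp_closed {Z : Set G} {F : Finset G} {x : G} (hx : x ∈ Z) :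
    Closed Z F (comp Z F x) := by
  constructor
  · exact comp_subset hx
  · intro u hu y hy hrel
    exact Set.mem_sInter.2 fun C hC => hC.1.2 u (Set.mem_sInter.1 hu C hC) y hy hrel

lemma comp_mono {Z : Set G} {F F' : Finset G} {x : G} (hx : x ∈ Z) (h : F ⊆ F') :
    comp Z F x ⊆ comp Z F' x := by
  refine comp_min ?_ (mem_comp_self hx)
  refine ⟨(comp_closed hx).1, fun u hu y hy hrel => ?_⟩
  exact (comp_closed hx (F := F')).2 u hu y hy (ball_mono h hrel)

/-- The key coarse invariant: `v` is a stable clump size of `Z`. -/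
def SpecMem (Z : Set G) (v : ℕ) : Prop :=
  2 ≤ v ∧ ∃ F₁ : Finset G, ∀ F₂ : Finset G, F₁ ⊆ F₂ →
    {a | a ∈ Z ∧ comp Z F₁ a = comp Z F₂ a ∧ (comp Z F₂ a).Finite ∧
      (comp Z F₂ a).ncard = v}.Infinite


section Transfer

variable {Y Y' : Set G} (f : Y ≃ Y')

private noncomputable def phi (f : Y ≃ Y') : G → G :=
  fun a => if h : a ∈ Y then (f ⟨a, h⟩ : G) else 1

private noncomputable def psi (f : Y ≃ Y') : G → G :=
  fun a => if h : a ∈ Y' then (f.symm ⟨a, h⟩ : G) else 1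

lemma phi_eq {a : G} (h : a ∈ Y) : phi f a = (f ⟨a, h⟩ : G) := dif_pos h

lemma psi_eq {a : G} (h : a ∈ Y') : psi f a = (f.symm ⟨a, h⟩ : G) := dif_pos h

lemma phi_mem {a : G} (h : a ∈ Y) : phi f a ∈ Y' := by
  rw [phi_eq f h]; exact (f ⟨a, h⟩).2

lemma psi_mem {a : G} (h : a ∈ Y') : psi f a ∈ Y := by
  rw [psi_eq f h]; exact (f.symm ⟨a, h⟩).2

lemma psi_phi {a : G} (h : a ∈ Y) : psi f (phi f a) = a := by
  rw [psi_eq f (phi_mem f h)]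
  have : (⟨phi f a, phi_mem f h⟩ : Y') = f ⟨a, h⟩ := Subtype.ext (phi_eq f h)
  rw [this, Equiv.symm_apply_apply]

lemma phi_psi {a : G} (h : a ∈ Y') : phi f (psi f a) = a := by
  rw [phi_eq f (psi_mem f h)]
  have : (⟨psi f a, psi_mem f h⟩ : Y) = f.symm ⟨a, h⟩ := Subtype.ext (psi_eq f h)
  rw [this, Equiv.apply_symm_apply]

lemma phi_injOn : Set.InjOn (phi f) Y := by
  intro a ha b hb hab
  have := congrArg (psi f) hab
  rwa [psi_phi f ha, psi_phi f hb] at this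

lemma asym_fwd (hf : IsAsymorphism Y Y' f) (F : Finset G) :
    ∃ F' : Finset G, ∀ a b : G, ∀ (ha : a ∈ Y), b ∈ Y →
      b ∈ (F : Set G) * {a} ∪ {a} →
      phi f b ∈ (F' : Set G) * {phi f a} ∪ {phi f a} := by
  obtain ⟨F', hF'⟩ := hf.1 F
  refine ⟨F', fun a b ha hb hrel => ?_⟩
  have := hF' ⟨a, ha⟩ ⟨b, hb⟩ hrel
  rwa [phi_eq f ha, phi_eq f hb]

lemma asym_bwd (hf : IsAsymorphism Y Y' f) (F : Finset G) :
    ∃ F' : Finset G, ∀ a b : G, ∀ (ha : a ∈ Y'), b ∈ Y' →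
      b ∈ (F : Set G) * {a} ∪ {a} →
      psi f b ∈ (F' : Set G) * {psi f a} ∪ {psi f a} := by
  obtain ⟨F', hF'⟩ := hf.2 F
  refine ⟨F', fun a b ha hb hrel => ?_⟩
  have := hF' ⟨a, ha⟩ ⟨b, hb⟩ hrel
  rwa [psi_eq f ha, psi_eq f hb]

theorem SpecMem_transfer (hf : IsAsymorphism Y Y' f) {v : ℕ}
    (hv : SpecMem Y v) : SpecMem Y' v := by
  obtain ⟨hv2, F₁, hF₁⟩ := hv
  obtain ⟨F₁', hfwd⟩ := asym_fwd f hf F₁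
  refine ⟨hv2, F₁' , fun F₂' hsub => ?_⟩
  obtain ⟨Psi₂, hbwd⟩ := asym_bwd f hf F₂'
  set F₂ : Finset G := F₁ ∪ Psi₂ with hF₂def
  have hsub12 : F₁ ⊆ F₂ := by rw [hF₂def]; exact Finset.subset_union_left
  have hsubP2 : Psi₂ ⊆ F₂ := by rw [hF₂def]; exact Finset.subset_union_right
  have hI := hF₁ F₂ hsub12
  -- show the image of the witness set under phi is inside the new witness set
  have key : ∀ a, a ∈ {a | a ∈ Y ∧ comp Y F₁ a = comp Y F₂ a ∧ (comp Y F₂ a).Finite ∧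
      (comp Y F₂ a).ncard = v} →
      phi f a ∈ {b | b ∈ Y' ∧ comp Y' F₁' b = comp Y' F₂' b ∧ (comp Y' F₂' b).Finite ∧
      (comp Y' F₂' b).ncard = v} := by
    rintro a ⟨haY, heq, hfin, hcard⟩
    set C : Set G := comp Y F₁ a with hCdef
    have hCZ : C ⊆ Y := comp_subset haY
    have haC : a ∈ C := mem_comp_self haY
    -- Step s1 : phi '' C is F₂'-closed in Y'
    have s1 : Closed Y' F₂' (phi f '' C) := by
      constructor
      · rintro _ ⟨u, hu, rfl⟩
        exact phi_mem f (hCZ hu)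
      · rintro x' ⟨u, hu, rfl⟩ y' hy' hrel
        have huY : u ∈ Y := hCZ hu
        have h1 : psi f y' ∈ (Psi₂ : Set G) * {psi f (phi f u)} ∪ {psi f (phi f u)} :=
          hbwd (phi f u) y' (phi_mem f huY) hy' hrel
        rw [psi_phi f huY] at h1
        have h2 : psi f y' ∈ (F₂ : Set G) * {u} ∪ {u} :=
          ball_mono hsubP2 h1
        have hC2 : Closed Y F₂ C := by
          rw [heq]; exact comp_closed haY
        have : psi f y' ∈ C := hC2.2 u hu (psi f y') (psi_mem f hy') h2
        exact ⟨psi f y', this, phi_psi f hy'⟩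
    have s2 : phi f a ∈ phi f '' C := ⟨a, haC, rfl⟩
    have s3 : comp Y' F₂' (phi f a) ⊆ phi f '' C := comp_min s1 s2
    -- Step s4 : phi '' C ⊆ comp Y' F₁' (phi f a)
    have s4 : phi f '' C ⊆ comp Y' F₁' (phi f a) := by
      have hcl : Closed Y F₁ {b | b ∈ Y ∧ phi f b ∈ comp Y' F₁' (phi f a)} := by
        constructor
        · intro b hb; exact hb.1
        · rintro u ⟨huY, huD⟩ w hw hrel
          refine ⟨hw, ?_⟩
          have := hfwd u w huY hw hrel
          exact (comp_closed (phi_mem f haY) (F := F₁')).2 (phi f u) huD (phi f w)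
            (phi_mem f hw) this
      have haIn : a ∈ {b | b ∈ Y ∧ phi f b ∈ comp Y' F₁' (phi f a)} :=
        ⟨haY, mem_comp_self (phi_mem f haY)⟩
      have : C ⊆ {b | b ∈ Y ∧ phi f b ∈ comp Y' F₁' (phi f a)} := comp_min hcl haIn
      rintro _ ⟨u, hu, rfl⟩
      exact (this hu).2
    have s5 : comp Y' F₁' (phi f a) ⊆ comp Y' F₂' (phi f a) :=
      comp_mono (phi_mem f haY) hsub
    have e2 : comp Y' F₂' (phi f a) = phi f '' C :=
      Set.Subset.antisymm s3 (s4.trans s5)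
    have e1 : comp Y' F₁' (phi f a) = phi f '' C :=
      Set.Subset.antisymm (s5.trans s3) s4
    have hCfin : C.Finite := by rw [heq]; exact hfin
    have hCcard : C.ncard = v := by rw [heq]; exact hcard
    refine ⟨phi_mem f haY, by rw [e1, e2], ?_, ?_⟩
    · rw [e2]; exact hCfin.image _
    · rw [e2, Set.ncard_image_of_injOn ((phi_injOn f).mono hCZ)]; exact hCcard
  have hWsub : {a | a ∈ Y ∧ comp Y F₁ a = comp Y F₂ a ∧ (comp Y F₂ a).Finite ∧
      (comp Y F₂ a).ncard = v} ⊆ Y := fun a ha => ha.1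
  have himg : ((phi f) '' {a | a ∈ Y ∧ comp Y F₁ a = comp Y F₂ a ∧ (comp Y F₂ a).Finite ∧
      (comp Y F₂ a).ncard = v}).Infinite := hI.image ((phi_injOn f).mono hWsub)
  refine himg.mono ?_
  rintro _ ⟨a, ha, rfl⟩
  exact key a ha

end Transfer


def mfun (i : ℕ) : ℕ := 2 ^ (2 ^ i)

lemma mfun_pos (i : ℕ) : 0 < mfun i := Nat.pow_pos (by norm_num)

lemma mfun_two_le (i : ℕ) : 2 ≤ mfun i := by
  have : (2:ℕ)^1 ≤ 2 ^ (2^i) := Nat.pow_le_pow_right (by norm_num) (Nat.one_le_two_pow)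
  simpa [mfun] using this

lemma mfun_mono : Monotone mfun := fun a b h =>
  Nat.pow_le_pow_right (by norm_num) (Nat.pow_le_pow_right (by norm_num) h)

lemma mfun_sq (i : ℕ) : mfun (i + 1) = mfun i * mfun i := by
  rw [mfun, mfun, ← pow_add]
  congr 1
  rw [pow_succ]
  omega

lemma mfun_ge (i : ℕ) : i + 1 ≤ mfun i := by
  have h1 : i < 2 ^ i := Nat.lt_two_pow_self
  have h2 : 2 ^ i ≤ 2 ^ (2 ^ i) := Nat.le_of_lt Nat.lt_two_pow_self
  have h3 : i < 2 ^ (2 ^ i) := lt_of_lt_of_le h1 h2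
  rw [mfun]
  omega

section Chain
variable (e : ℕ ≃ G)

noncomputable def Nfun (e : ℕ ≃ G) : ℕ → ℕ
  | 0 => 0
  | n + 1 => Nfun e n + 1 + mfun n *
      ((Subgroup.closure (((Finset.range (Nfun e n)).image e : Finset G) : Set G) :
        Subgroup G) : Set G).ncard

def Hh (e : ℕ ≃ G) (n : ℕ) : Subgroup G :=
  Subgroup.closure (((Finset.range (Nfun e n)).image e : Finset G) : Set G)

variable (hlf : ∀ s : Set G, s.Finite → ((Subgroup.closure s : Subgroup G) : Set G).Finite)

lemma Hh_fin (hlf : ∀ s : Set G, s.Finite → ((Subgroup.closure s : Subgroup G) : Set G).Finite) (n : ℕ) : ((Hh e n : Subgroup G) : Set G).Finite :=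
  hlf _ (Finset.finite_toSet _)

lemma Nfun_mono : Monotone (Nfun e) := monotone_nat_of_le_succ fun n => by
  rw [Nfun]; omega

lemma Hh_mono {a b : ℕ} (h : a ≤ b) : ((Hh e a : Subgroup G) : Set G) ⊆ Hh e b := by
  apply SetLike.coe_subset_coe.2
  apply Subgroup.closure_mono
  apply Finset.coe_subset.2
  exact Finset.image_subset_image (Finset.range_subset_range.2 (Nfun_mono e h))

lemma Nfun_le_ncard (hlf : ∀ s : Set G, s.Finite → ((Subgroup.closure s : Subgroup G) : Set G).Finite) (n : ℕ) : Nfun e n ≤ ((Hh e n : Subgroup G) : Set G).ncard := by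
  have hsub : (((Finset.range (Nfun e n)).image e : Finset G) : Set G) ⊆
      ((Hh e n : Subgroup G) : Set G) := Subgroup.subset_closure
  have h1 : (((Finset.range (Nfun e n)).image e : Finset G) : Set G).ncard =
      ((Finset.range (Nfun e n)).image e).card := Set.ncard_coe_finset _
  have h2 : ((Finset.range (Nfun e n)).image e).card = Nfun e n := by
    rw [Finset.card_image_of_injective _ e.injective, Finset.card_range]
  calc Nfun e n = (((Finset.range (Nfun e n)).image e : Finset G) : Set G).ncard := by
        rw [h1, h2]
    _ ≤ _ := Set.ncard_le_ncard hsub (Hh_fin e hlf n)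

lemma Hh_growth (hlf : ∀ s : Set G, s.Finite → ((Subgroup.closure s : Subgroup G) : Set G).Finite) (n : ℕ) :
    mfun n * ((Hh e n : Subgroup G) : Set G).ncard <
      ((Hh e (n+1) : Subgroup G) : Set G).ncard := by
  have := Nfun_le_ncard e hlf (n+1)
  have h : Nfun e (n+1) = Nfun e n + 1 + mfun n * ((Hh e n : Subgroup G) : Set G).ncard := by
    rw [Nfun]; rfl
  omega

lemma Hh_ncard_pos (hlf : ∀ s : Set G, s.Finite → ((Subgroup.closure s : Subgroup G) : Set G).Finite) (n : ℕ) : 0 < ((Hh e n : Subgroup G) : Set G).ncard := by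
  rw [Set.ncard_pos (Hh_fin e hlf n)]
  exact ⟨1, SetLike.mem_coe.2 (one_mem _)⟩

lemma exists_x (hlf : ∀ s : Set G, s.Finite → ((Subgroup.closure s : Subgroup G) : Set G).Finite) (n : ℕ) : ∃ z, z ∈ ((Hh e (n+1) : Subgroup G) : Set G) ∧
    z ∉ ((Hh e n : Subgroup G) : Set G) := by
  by_contra h
  push_neg at h
  have hsub : ((Hh e (n+1) : Subgroup G) : Set G) ⊆ Hh e n := fun z hz => h z hz
  have hle := Set.ncard_le_ncard hsub (Hh_fin e hlf n)
  have := Hh_growth e hlf n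
  have h1 : ((Hh e n : Subgroup G) : Set G).ncard ≤
      mfun n * ((Hh e n : Subgroup G) : Set G).ncard :=
    Nat.le_mul_of_pos_left _ (mfun_pos n)
  omega

/-- greedy choice of coset representatives -/
lemma greedy (Hs Hb : Subgroup G) (hfs : ((Hs : Subgroup G) : Set G).Finite)
    (hfb : ((Hb : Subgroup G) : Set G).Finite) :
    ∀ v : ℕ, v * ((Hs : Subgroup G) : Set G).ncard ≤ ((Hb : Subgroup G) : Set G).ncard →
    ∃ c : Fin v → G, (∀ j, c j ∈ Hb) ∧ ∀ j k, j ≠ k → c j * (c k)⁻¹ ∉ Hs := by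
  intro v
  induction v with
  | zero =>
    intro _
    exact ⟨fun j => j.elim0, fun j => j.elim0, fun j => j.elim0⟩
  | succ v ih =>
    intro hcard
    have hmono : v * ((Hs : Subgroup G) : Set G).ncard ≤
        ((Hb : Subgroup G) : Set G).ncard :=
      le_trans (Nat.mul_le_mul_right _ (Nat.le_succ v)) hcard
    obtain ⟨c, hcmem, hcdist⟩ := ih hmono
    set As : Finset G := hfs.toFinset with hAs
    set Ab : Finset G := hfb.toFinset with hAb
    have hAscard : As.card = ((Hs : Subgroup G) : Set G).ncard :=
      (Set.ncard_eq_toFinset_card _ _).symm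
    have hAbcard : Ab.card = ((Hb : Subgroup G) : Set G).ncard :=
      (Set.ncard_eq_toFinset_card _ _).symm
    set U : Finset G := Finset.univ.biUnion (fun j : Fin v => As.image (fun h => h * c j))
      with hU
    have hUcard : U.card ≤ v * As.card := by
      calc U.card ≤ ∑ _j : Fin v, As.card := by
            refine le_trans (Finset.card_biUnion_le) ?_
            exact Finset.sum_le_sum fun j _ => Finset.card_image_le
        _ = v * As.card := by simp [Finset.sum_const, mul_comm]
    have hAspos : 0 < As.card := by
      rw [hAscard]
      rw [Set.ncard_pos hfs]
      exact ⟨1, SetLike.mem_coe.2 (one_mem _)⟩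
    have hlt : U.card < Ab.card := by
      rw [hAbcard]
      have h2 : (v+1) * As.card ≤ ((Hb : Subgroup G) : Set G).ncard := by
        rw [hAscard]; exact hcard
      have hsplit : (v+1) * As.card = v * As.card + As.card := Nat.succ_mul v As.card
      omega
    have hnsub : ¬ Ab ⊆ U := fun hs => absurd (Finset.card_le_card hs) (by omega)
    obtain ⟨a, haAb, haU⟩ := Finset.not_subset.1 hnsub
    have haHb : a ∈ Hb := by
      have := (Set.Finite.mem_toFinset hfb).1 haAb
      exact SetLike.mem_coe.1 this
    have hanotcoset : ∀ j : Fin v, a * (c j)⁻¹ ∉ Hs := by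
      intro j hmem
      apply haU
      rw [hU]
      refine Finset.mem_biUnion.2 ⟨j, Finset.mem_univ _, ?_⟩
      refine Finset.mem_image.2 ⟨a * (c j)⁻¹, ?_, by group⟩
      rw [hAs, Set.Finite.mem_toFinset]
      exact SetLike.mem_coe.2 hmem
    refine ⟨fun j => if h : (j : ℕ) < v then c ⟨j, h⟩ else a, ?_, ?_⟩
    · intro j
      by_cases h : (j : ℕ) < v
      · simpa [h] using hcmem ⟨j, h⟩
      · simpa [h] using haHb
    · intro j k hjk
      by_cases hj : (j : ℕ) < v <;> by_cases hk : (k : ℕ) < v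
      · have : (⟨j, hj⟩ : Fin v) ≠ ⟨k, hk⟩ := by
          intro hcon
          apply hjk
          have := congrArg (fun z : Fin v => (z : ℕ)) hcon
          exact Fin.ext this
        simpa [hj, hk] using hcdist _ _ this
      · -- j old, k new : c j' * a⁻¹ ∉ Hs
        simp only [hj, hk, dif_pos, dif_neg, not_false_iff]
        intro hmem
        exact hanotcoset ⟨j, hj⟩ ((Subgroup.inv_mem_iff _).1 (by simpa using hmem))
      · simp only [hj, hk, dif_pos, dif_neg, not_false_iff]
        intro hmem
        exact hanotcoset ⟨k, hk⟩ hmem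
      · exfalso
        apply hjk
        have hjv : (j : ℕ) = v := by omega
        have hkv : (k : ℕ) = v := by omega
        exact Fin.ext (hjv.trans hkv.symm)

lemma exists_reps (hlf : ∀ s : Set G, s.Finite → ((Subgroup.closure s : Subgroup G) : Set G).Finite) (i : ℕ) :
    ∃ c : Fin (mfun i) → G, (∀ j, c j ∈ Hh e (i+1)) ∧
      ∀ j k, j ≠ k → c j * (c k)⁻¹ ∉ Hh e i := by
  apply greedy (Hh e i) (Hh e (i+1)) (Hh_fin e hlf i) (Hh_fin e hlf (i+1))
  exact le_of_lt (Hh_growth e hlf i)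

lemma mem_Hh_self (g : G) : g ∈ Hh e (e.symm g + 1) := by
  apply Subgroup.subset_closure
  rw [Finset.coe_image, Finset.coe_range]
  refine ⟨e.symm g, ?_, by simp⟩
  have h1 : e.symm g + 1 ≤ Nfun e (e.symm g + 1) := by
    have : ∀ n, n ≤ Nfun e n := by
      intro n
      induction n with
      | zero => simp
      | succ n ih => rw [Nfun]; omega
    exact this _
  exact Set.mem_Iio.2 (by omega)

lemma Hh_exh (s : Set G) (hs : s.Finite) : ∃ K, s ⊆ ((Hh e K : Subgroup G) : Set G) := by
  refine ⟨hs.toFinset.sup (fun g => e.symm g + 1), fun g hg => ?_⟩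
  have hK : e.symm g + 1 ≤ hs.toFinset.sup (fun g => e.symm g + 1) :=
    Finset.le_sup (f := fun g => e.symm g + 1) (hs.mem_toFinset.2 hg)
  exact Hh_mono e hK (SetLike.mem_coe.2 (mem_Hh_self e g))

end Chain

def pfun : ℕ → ℕ
  | 0 => (Nat.unpair 0).1 + 1
  | t + 1 => max (pfun t + 1) ((Nat.unpair (t+1)).1 + 1)

lemma pfun_strictMono : StrictMono pfun :=
  strictMono_nat_of_lt_succ fun t => by
    rw [pfun]; exact lt_of_lt_of_le (Nat.lt_succ_self _) (le_max_left _ _)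

lemma pfun_ge_idx (t : ℕ) : (Nat.unpair t).1 + 1 ≤ pfun t := by
  cases t with
  | zero => rw [pfun]
  | succ t => rw [pfun]; exact le_max_right _ _

lemma pfun_ge (t : ℕ) : t ≤ pfun t := pfun_strictMono.le_apply

structure Pack (G : Type*) [Group G] where
  H : ℕ → Subgroup G
  hfin : ∀ n, ((H n : Subgroup G) : Set G).Finite
  hmono : ∀ {a b : ℕ}, a ≤ b → ((H a : Subgroup G) : Set G) ⊆ ((H b : Subgroup G) : Set G)
  hexh : ∀ s : Set G, s.Finite → ∃ K, s ⊆ ((H K : Subgroup G) : Set G)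
  c : (i : ℕ) → Fin (mfun i) → G
  hcmem : ∀ i j, c i j ∈ H (i + 1)
  hcdist : ∀ i, ∀ j k, j ≠ k → c i j * (c i k)⁻¹ ∉ H i
  x : ℕ → G
  hx1 : ∀ t, x t ∈ ((H (pfun t + 1) : Subgroup G) : Set G)
  hx2 : ∀ t, x t ∉ ((H (pfun t) : Subgroup G) : Set G)

lemma pack_nonempty [Countable G] [Infinite G]
    (hlf : ∀ s : Set G, s.Finite → ((Subgroup.closure s : Subgroup G) : Set G).Finite) :
    Nonempty (Pack G) := by
  obtain ⟨e'⟩ := nonempty_equiv_of_countable (α := G) (β := ℕ)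
  let e : ℕ ≃ G := e'.symm
  refine ⟨⟨Hh e, Hh_fin e hlf, fun h => Hh_mono e h, Hh_exh e,
    fun i => (exists_reps e hlf i).choose,
    fun i => (exists_reps e hlf i).choose_spec.1,
    fun i => (exists_reps e hlf i).choose_spec.2,
    fun t => (exists_x e hlf (pfun t)).choose,
    fun t => (exists_x e hlf (pfun t)).choose_spec.1,
    fun t => (exists_x e hlf (pfun t)).choose_spec.2⟩⟩



section Clumps
variable (P : Pack G)

def uidx (t : ℕ) : ℕ := (Nat.unpair t).1

noncomputable def clump (P : Pack G) (t : ℕ) : Set G :=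
  (fun g => g * P.x t) '' (Set.range (P.c (uidx t)))

def XX (P : Pack G) (T : Set ℕ) : Set G := ⋃ (t : ℕ) (_ : uidx t ∈ T), clump P t

lemma mem_XX {T : Set ℕ} {z : G} : z ∈ XX P T ↔ ∃ t, uidx t ∈ T ∧ z ∈ clump P t := by
  simp [XX]

lemma clump_mem_H {t : ℕ} {z : G} (hz : z ∈ clump P t) :
    z ∈ ((P.H (pfun t + 1) : Subgroup G) : Set G) := by
  obtain ⟨g, ⟨j, rfl⟩, rfl⟩ := hz
  have h1 : P.c (uidx t) j ∈ P.H (pfun t + 1) := by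
    have := P.hcmem (uidx t) j
    have hle : uidx t + 1 ≤ pfun t + 1 := by
      have := pfun_ge_idx t
      simp only [uidx]
      omega
    exact SetLike.mem_coe.1 (P.hmono hle (SetLike.mem_coe.2 this))
  exact SetLike.mem_coe.2 (mul_mem h1 (SetLike.mem_coe.1 (P.hx1 t)))

lemma clump_not_mem_H {t : ℕ} {z : G} (hz : z ∈ clump P t) :
    z ∉ ((P.H (pfun t) : Subgroup G) : Set G) := by
  obtain ⟨g, ⟨j, rfl⟩, rfl⟩ := hz
  intro hmem
  apply P.hx2 t
  have hc : P.c (uidx t) j ∈ P.H (pfun t) := by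
    have := P.hcmem (uidx t) j
    have hle : uidx t + 1 ≤ pfun t := by
      have := pfun_ge_idx t
      simp only [uidx]
      omega
    exact SetLike.mem_coe.1 (P.hmono hle (SetLike.mem_coe.2 this))
  have : (P.c (uidx t) j)⁻¹ * (P.c (uidx t) j * P.x t) ∈ P.H (pfun t) :=
    mul_mem (inv_mem hc) (SetLike.mem_coe.1 hmem)
  simpa [mul_assoc] using SetLike.mem_coe.2 this

lemma clump_ratio_mem {t : ℕ} {z w : G} (hz : z ∈ clump P t) (hw : w ∈ clump P t) :
    z * w⁻¹ ∈ ((P.H (uidx t + 1) : Subgroup G) : Set G) := by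
  obtain ⟨g, ⟨j, rfl⟩, rfl⟩ := hz
  obtain ⟨g', ⟨k, rfl⟩, rfl⟩ := hw
  have : P.c (uidx t) j * P.x t * (P.c (uidx t) k * P.x t)⁻¹ =
      P.c (uidx t) j * (P.c (uidx t) k)⁻¹ := by group
  rw [this]
  exact SetLike.mem_coe.2 (mul_mem (P.hcmem _ j) (inv_mem (P.hcmem _ k)))

lemma clump_ratio_not_mem {t : ℕ} {z w : G} (hz : z ∈ clump P t) (hw : w ∈ clump P t)
    (hne : z ≠ w) : z * w⁻¹ ∉ ((P.H (uidx t) : Subgroup G) : Set G) := by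
  obtain ⟨g, ⟨j, rfl⟩, rfl⟩ := hz
  obtain ⟨g', ⟨k, rfl⟩, rfl⟩ := hw
  have heq : P.c (uidx t) j * P.x t * (P.c (uidx t) k * P.x t)⁻¹ =
      P.c (uidx t) j * (P.c (uidx t) k)⁻¹ := by group
  rw [heq]
  have hjk : j ≠ k := by
    intro h
    exact hne (by rw [h])
  intro hmem
  exact P.hcdist (uidx t) j k hjk (SetLike.mem_coe.1 hmem)

lemma clump_fin (t : ℕ) : (clump P t).Finite :=
  (Set.finite_range _).image _

lemma clump_ncard (t : ℕ) : (clump P t).ncard = mfun (uidx t) := by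
  have hcinj : Function.Injective (P.c (uidx t)) := by
    intro j k h
    by_contra hne
    apply P.hcdist (uidx t) j k hne
    rw [h]
    simpa using one_mem (P.H (uidx t))
  have h1 : (clump P t).ncard = (Set.range (P.c (uidx t))).ncard :=
    Set.ncard_image_of_injective _ (mul_left_injective (P.x t))
  rw [h1, ← Set.image_univ, Set.ncard_image_of_injective _ hcinj, Set.ncard_univ]
  simp

lemma cross_not {t t' : ℕ} (hne : t ≠ t') {z w g : G} (hz : z ∈ clump P t)
    (hw : w ∈ clump P t')
    (hg : g ∈ ((P.H (pfun t) : Subgroup G) : Set G) ∨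
          g ∈ ((P.H (pfun t') : Subgroup G) : Set G))
    (heq : g * z = w) : False := by
  have hpne : pfun t ≠ pfun t' := fun h => hne (pfun_strictMono.injective h)
  rcases lt_or_gt_of_ne hpne with hlt | hlt
  · -- pfun t < pfun t'
    have hz' : z ∈ ((P.H (pfun t') : Subgroup G) : Set G) :=
      P.hmono (Nat.succ_le_of_lt hlt) (clump_mem_H P hz)
    have hg' : g ∈ ((P.H (pfun t') : Subgroup G) : Set G) := by
      rcases hg with h | h
      · exact P.hmono (le_of_lt hlt) h
      · exact h
    apply clump_not_mem_H P hw
    rw [← heq]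
    exact SetLike.mem_coe.2 (mul_mem (SetLike.mem_coe.1 hg') (SetLike.mem_coe.1 hz'))
  · -- pfun t' < pfun t
    have hw' : w ∈ ((P.H (pfun t) : Subgroup G) : Set G) :=
      P.hmono (Nat.succ_le_of_lt hlt) (clump_mem_H P hw)
    have hg' : g ∈ ((P.H (pfun t) : Subgroup G) : Set G) := by
      rcases hg with h | h
      · exact h
      · exact P.hmono (le_of_lt hlt) h
    apply clump_not_mem_H P hz
    have : z = g⁻¹ * w := by rw [← heq]; group
    rw [this]
    exact SetLike.mem_coe.2 (mul_mem (inv_mem (SetLike.mem_coe.1 hg'))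
      (SetLike.mem_coe.1 hw'))

lemma clump_disj {t t' : ℕ} (hne : t ≠ t') {z : G} (hz : z ∈ clump P t)
    (hz' : z ∈ clump P t') : False := by
  refine cross_not P hne hz hz' (Or.inl ?_) (one_mul z)
  simpa using one_mem (P.H (pfun t))

/-- S1 : a clump piece is closed at scales below its annulus level -/
lemma clump_closed {T : Set ℕ} {Z : Set G} (hZ : Z ⊆ XX P T) (t : ℕ) (F : Finset G)
    (hF : (F : Set G) ⊆ ((P.H (pfun t) : Subgroup G) : Set G)) :
    Closed Z F (Z ∩ clump P t) := by
  constructor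
  · exact Set.inter_subset_left
  · rintro x ⟨hxZ, hxc⟩ y hyZ hrel
    rcases ball_ratio hrel with rfl | hrat
    · exact ⟨hyZ, hxc⟩
    obtain ⟨t', ht'T, hyc⟩ := (mem_XX P).1 (hZ hyZ)
    by_cases hts : t' = t
    · exact ⟨hyZ, hts ▸ hyc⟩
    · exfalso
      refine cross_not P (fun h => hts h.symm) hxc hyc (Or.inl (hF hrat)) ?_
      group

/-- S2 : any closed set meeting a clump swallows the whole clump piece -/
lemma clump_cohesive {Z : Set G} (t : ℕ) (F : Finset G)
    (hF : ((P.H (uidx t + 1) : Subgroup G) : Set G) ⊆ (F : Set G))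
    {D : Set G} (hD : Closed Z F D) {x : G} (hxD : x ∈ D) (hxc : x ∈ clump P t) :
    Z ∩ clump P t ⊆ D := by
  rintro y ⟨hyZ, hyc⟩
  by_cases hxy : y = x
  · exact hxy ▸ hxD
  · refine hD.2 x hxD y hyZ (ratio_ball (hF ?_))
    exact clump_ratio_mem P hyc hxc

/-- S3 : singletons in clumps are closed below the internal level -/
lemma singleton_closed {T : Set ℕ} {Z : Set G} (hZ : Z ⊆ XX P T) (t : ℕ) {x : G}
    (hxZ : x ∈ Z) (hxc : x ∈ clump P t) (F : Finset G)
    (hF : (F : Set G) ⊆ ((P.H (uidx t) : Subgroup G) : Set G)) :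
    Closed Z F {x} := by
  constructor
  · simpa using hxZ
  · rintro u hu y hyZ hrel
    obtain rfl : u = x := Set.mem_singleton_iff.1 hu
    rcases ball_ratio hrel with rfl | hrat
    · rfl
    obtain ⟨t', ht'T, hyc⟩ := (mem_XX P).1 (hZ hyZ)
    have hmem := hF hrat
    by_cases hts : t' = t
    · subst hts
      by_cases hyu : y = u
      · simpa using hyu
      · exact absurd hmem (clump_ratio_not_mem P hyc hxc hyu)
    · exfalso
      have h2 : uidx t + 1 ≤ pfun t := pfun_ge_idx t
      have hidx : ((P.H (pfun t) : Subgroup G) : Set G) ⊇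
          ((P.H (uidx t) : Subgroup G) : Set G) := P.hmono (by omega)
      refine cross_not P (fun h => hts h.symm) hxc hyc (Or.inl (hidx hmem)) ?_
      group

/-- S4 : low part is closed -/
lemma low_closed (Z : Set G) (K : ℕ) (F : Finset G)
    (hF : (F : Set G) ⊆ ((P.H K : Subgroup G) : Set G)) :
    Closed Z F (Z ∩ ((P.H K : Subgroup G) : Set G)) := by
  constructor
  · exact Set.inter_subset_left
  · rintro x ⟨hxZ, hxH⟩ y hyZ hrel
    rcases ball_ratio hrel with rfl | hrat
    · exact ⟨hyZ, hxH⟩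
    refine ⟨hyZ, ?_⟩
    have : y = (y * x⁻¹) * x := by group
    rw [this]
    exact SetLike.mem_coe.2 (mul_mem (SetLike.mem_coe.1 (hF hrat))
      (SetLike.mem_coe.1 hxH))

lemma ncard_fmul_le (F : Finset G) (D : Set G) (hD : D.Finite) :
    ((F : Set G) * D).ncard ≤ F.card * D.ncard := by
  induction F using Finset.induction_on with
  | empty => simp [Set.empty_mul]
  | @insert a s ha ih =>
    rw [Finset.coe_insert, Set.insert_eq, Set.union_mul]
    have h1 : ({a} * D : Set G).ncard ≤ D.ncard := by
      rw [Set.singleton_mul]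
      exact le_of_eq (Set.ncard_image_of_injective _ (mul_right_injective a))
    have h2 := Set.ncard_union_le ({a} * D : Set G) ((s : Set G) * D)
    have h3 : (insert a s).card ≤ s.card + 1 := Finset.card_insert_le _ _
    have h4 : (s.card + 1) * D.ncard = s.card * D.ncard + D.ncard :=
      Nat.succ_mul _ _
    have h5 : (insert a s).card * D.ncard ≥ (s.card + 1) * D.ncard ∨ True := Or.inr trivial
    have hcard : (insert a s).card = s.card + 1 := Finset.card_insert_of_notMem ha
    rw [hcard, h4]
    omega

/-- S5 : largeness forces a definite fraction of every high clump -/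
lemma large_clump {T : Set ℕ} {Y : Set G} (hsub : Y ⊆ XX P T) (F₀ : Finset G)
    (hcov : XX P T ⊆ (F₀ : Set G) * Y ∪ Y) :
    ∃ K₀ : ℕ, ∀ t, uidx t ∈ T → K₀ ≤ pfun t →
      mfun (uidx t) ≤ (F₀.card + 1) * (Y ∩ clump P t).ncard := by
  obtain ⟨K₀, hK₀⟩ := P.hexh (F₀ : Set G) (Finset.finite_toSet _)
  refine ⟨K₀, fun t htT hpt => ?_⟩
  have hcover : clump P t ⊆ (F₀ : Set G) * (Y ∩ clump P t) ∪ (Y ∩ clump P t) := by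
    intro z hz
    have hzX : z ∈ XX P T := (mem_XX P).2 ⟨t, htT, hz⟩
    rcases hcov hzX with hzm | hzY
    · rw [Set.mem_mul] at hzm
      obtain ⟨g, hg, y, hyY, heq⟩ := hzm
      have hgH : g ∈ ((P.H (pfun t) : Subgroup G) : Set G) := P.hmono hpt (hK₀ hg)
      obtain ⟨t', ht'T, hyc⟩ := (mem_XX P).1 (hsub hyY)
      have hts : t' = t := by
        by_contra hts
        exact cross_not P hts hyc hz (Or.inr hgH) heq
      subst hts
      refine Or.inl ?_
      rw [Set.mem_mul]
      exact ⟨g, hg, y, ⟨hyY, hyc⟩, heq⟩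
    · exact Or.inr ⟨hzY, hz⟩
  set D : Set G := Y ∩ clump P t with hD
  have hDfin : D.Finite := (clump_fin P t).subset Set.inter_subset_right
  have hUfin : ((F₀ : Set G) * D ∪ D).Finite :=
    (((Finset.finite_toSet F₀).mul hDfin)).union hDfin
  have h1 : (clump P t).ncard ≤ ((F₀ : Set G) * D ∪ D).ncard :=
    Set.ncard_le_ncard hcover hUfin
  have h2 := Set.ncard_union_le ((F₀ : Set G) * D) D
  have h3 := ncard_fmul_le F₀ D hDfin
  have h4 : (F₀.card + 1) * D.ncard = F₀.card * D.ncard + D.ncard := Nat.succ_mul _ _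
  rw [clump_ncard P t] at h1
  omega

/-- the clumps carrying index i with high annulus level are infinitely many -/
lemma infinite_clumps (i K : ℕ) : {t : ℕ | uidx t = i ∧ K ≤ pfun t}.Infinite := by
  have h1 : Set.InjOn (fun l => Nat.pair i l) (Set.univ : Set ℕ) := by
    intro a _ b _ h
    have := congrArg (fun z => (Nat.unpair z).2) h
    simpa using this
  have h2 : (Set.range (fun l => Nat.pair i l)).Infinite := by
    rw [← Set.image_univ]
    exact Set.infinite_univ.image h1
  have h3 : (Set.range (fun l => Nat.pair i l) \ {t : ℕ | t < K}).Infinite :=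
    h2.diff (Set.finite_Iio K)
  refine h3.mono ?_
  rintro t ⟨⟨l, rfl⟩, ht⟩
  constructor
  · simp [uidx]
  · show K ≤ pfun (Nat.pair i l)
    have := pfun_ge (Nat.pair i l)
    simp only [Set.mem_setOf_eq, not_lt] at ht
    omega

/-- L-lemma : every index of T contributes a stable Spec value -/
lemma Llem {T : Set ℕ} {Y : Set G} (hsub : Y ⊆ XX P T) (F₀ : Finset G)
    (hcov : XX P T ⊆ (F₀ : Set G) * Y ∪ Y) (i : ℕ) (hiT : i ∈ T)
    (hbig : 2 * (F₀.card + 1) ≤ mfun i) :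
    ∃ v : ℕ, SpecMem Y v ∧ v ≤ mfun i ∧ mfun i ≤ (F₀.card + 1) * v := by
  classical
  obtain ⟨K₀, hK₀⟩ := large_clump P hsub F₀ hcov
  set c : ℕ := F₀.card + 1 with hc
  have hGood : {t : ℕ | uidx t = i ∧ K₀ ≤ pfun t}.Infinite := infinite_clumps i K₀
  have hval : ∃ v : ℕ, {t : ℕ | (uidx t = i ∧ K₀ ≤ pfun t) ∧
      (Y ∩ clump P t).ncard = v}.Infinite := by
    by_contra hcon
    push_neg at hcon
    have hfin : ∀ v : ℕ, {t : ℕ | (uidx t = i ∧ K₀ ≤ pfun t) ∧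
        (Y ∩ clump P t).ncard = v}.Finite := fun v => hcon v
    have hcover : {t : ℕ | uidx t = i ∧ K₀ ≤ pfun t} ⊆
        ⋃ v ∈ Finset.range (mfun i + 1), {t : ℕ | (uidx t = i ∧ K₀ ≤ pfun t) ∧
          (Y ∩ clump P t).ncard = v} := by
      intro t ht
      have hle : (Y ∩ clump P t).ncard ≤ mfun i := by
        have h := Set.ncard_le_ncard (Set.inter_subset_right (s := Y)) (clump_fin P t)
        rw [clump_ncard P t, ht.1] at h
        exact h
      exact Set.mem_biUnion (Finset.mem_range.2 (by omega)) ⟨ht, rfl⟩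
    exact hGood (Set.Finite.subset
      (Set.Finite.biUnion (Finset.finite_toSet _) fun v _ => hfin v) hcover)
  obtain ⟨v, hvInf⟩ := hval
  obtain ⟨t₀, ht₀⟩ := hvInf.nonempty
  simp only [Set.mem_setOf_eq] at ht₀
  obtain ⟨⟨hti, htp⟩, htv⟩ := ht₀
  have hv_le : v ≤ mfun i := by
    have h := Set.ncard_le_ncard (Set.inter_subset_right (s := Y)) (clump_fin P t₀)
    rw [clump_ncard P t₀, hti, htv] at h
    exact h
  have hv_ge : mfun i ≤ c * v := by
    have h := hK₀ t₀ (by rw [hti]; exact hiT) htp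
    rw [hti, htv] at h
    exact h
  have hcpos : 0 < c := by omega
  have hv2 : 2 ≤ v := by
    by_contra hv
    push_neg at hv
    have hcv : c * v ≤ c := by
      calc c * v ≤ c * 1 := Nat.mul_le_mul_left c (by omega)
        _ = c := mul_one c
    omega
  refine ⟨v, ⟨hv2, (P.hfin (i+1)).toFinset, ?_⟩, hv_le, hv_ge⟩
  intro F₂ hF₂sub
  obtain ⟨K₁, hK₁⟩ := P.hexh (F₂ : Set G) (Finset.finite_toSet _)
  set Sv : Set ℕ := {t : ℕ | (uidx t = i ∧ K₀ ≤ pfun t) ∧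
      (Y ∩ clump P t).ncard = v} with hSv
  have hGK : (Sv \ {t : ℕ | t < K₁}).Infinite := hvInf.diff (Set.finite_Iio K₁)
  -- pointwise claim
  have hpoint : ∀ t, t ∈ Sv \ {t : ℕ | t < K₁} → ∀ a, a ∈ Y ∩ clump P t →
      a ∈ {a | a ∈ Y ∧ comp Y (P.hfin (i+1)).toFinset a = comp Y F₂ a ∧
        (comp Y F₂ a).Finite ∧ (comp Y F₂ a).ncard = v} := by
    rintro t ⟨⟨⟨hti', htp'⟩, htv'⟩, htK⟩ a ⟨haY, hac⟩
    have hK₁pt : K₁ ≤ pfun t := by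
      simp only [Set.mem_setOf_eq, not_lt] at htK
      have := pfun_ge t
      omega
    have hD2 : Closed Y F₂ (Y ∩ clump P t) :=
      clump_closed P hsub t F₂ (fun g hg => P.hmono hK₁pt (hK₁ hg))
    have h2 : comp Y F₂ a ⊆ Y ∩ clump P t := comp_min hD2 ⟨haY, hac⟩
    have hF₁set : ((P.H (uidx t + 1) : Subgroup G) : Set G) ⊆
        (((P.hfin (i+1)).toFinset : Finset G) : Set G) := by
      rw [hti', Set.Finite.coe_toFinset]
    have h3 : Y ∩ clump P t ⊆ comp Y (P.hfin (i+1)).toFinset a :=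
      clump_cohesive P t _ hF₁set (comp_closed haY) (mem_comp_self haY) hac
    have h4 : comp Y (P.hfin (i+1)).toFinset a ⊆ comp Y F₂ a := comp_mono haY hF₂sub
    have heq1 : comp Y (P.hfin (i+1)).toFinset a = comp Y F₂ a :=
      Set.Subset.antisymm h4 (h2.trans h3)
    have heqD : comp Y F₂ a = Y ∩ clump P t :=
      Set.Subset.antisymm h2 (h3.trans h4)
    refine ⟨haY, heq1, ?_, ?_⟩
    · rw [heqD]; exact (clump_fin P t).subset Set.inter_subset_right
    · rw [heqD]; exact htv'
  -- produce infinitely many witnesses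
  set θ : ℕ → G := fun t => if h : (Y ∩ clump P t).Nonempty then h.some else 1 with hθ
  have hθmem : ∀ t, t ∈ Sv \ {t : ℕ | t < K₁} → θ t ∈ Y ∩ clump P t := by
    rintro t ⟨⟨⟨hti', htp'⟩, htv'⟩, htK⟩
    have hne : (Y ∩ clump P t).Nonempty := by
      apply Set.nonempty_of_ncard_ne_zero
      rw [htv']
      omega
    simp only [hθ, dif_pos hne]
    exact hne.some_mem
  have hθinj : Set.InjOn θ (Sv \ {t : ℕ | t < K₁}) := by
    intro t ht t' ht' hθeq
    by_contra hne
    exact clump_disj P hne (hθmem t ht).2 (hθeq ▸ (hθmem t' ht').2)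
  refine ((hGK.image hθinj).mono ?_)
  rintro _ ⟨t, ht, rfl⟩
  exact hpoint t ht (θ t) (hθmem t ht)

/-- U-lemma : every Spec value comes from an index of S -/
lemma Ulem {S : Set ℕ} {Y' : Set G} (hsub : Y' ⊆ XX P S) (F₀' : Finset G)
    (hcov : XX P S ⊆ (F₀' : Set G) * Y' ∪ Y') {v : ℕ} (hspec : SpecMem Y' v) :
    ∃ j ∈ S, v ≤ mfun j ∧ mfun j ≤ (F₀'.card + 1) * v := by
  classical
  obtain ⟨hv2, F₁, hF₁⟩ := hspec
  obtain ⟨K₀, hK₀⟩ := large_clump P hsub F₀' hcov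
  obtain ⟨K₁, hK₁⟩ := P.hexh (F₁ : Set G) (Finset.finite_toSet _)
  set J : ℕ := max K₀ K₁ with hJ
  set F₂ : Finset G := (P.hfin J).toFinset ∪ F₁ with hF₂
  have hF₂sup : F₁ ⊆ F₂ := Finset.subset_union_right
  have hF₂set : (F₂ : Set G) ⊆ ((P.H J : Subgroup G) : Set G) := by
    rw [hF₂, Finset.coe_union, Set.Finite.coe_toFinset]
    refine Set.union_subset subset_rfl ?_
    exact hK₁.trans (P.hmono (le_max_right _ _))
  have hW := hF₁ F₂ hF₂sup
  have hW' : ({a | a ∈ Y' ∧ comp Y' F₁ a = comp Y' F₂ a ∧ (comp Y' F₂ a).Finite ∧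
      (comp Y' F₂ a).ncard = v} \ ((P.H J : Subgroup G) : Set G)).Infinite :=
    hW.diff (P.hfin J)
  obtain ⟨a, haW, haH⟩ := hW'.nonempty
  obtain ⟨haY, heq1, hfin, hcard⟩ := haW
  obtain ⟨t, htS, hac⟩ := (mem_XX P).1 (hsub haY)
  have hpt : J ≤ pfun t := by
    by_contra h
    push_neg at h
    exact haH (P.hmono (by omega) (clump_mem_H P hac))
  have hiJ : uidx t < J := by
    by_contra h
    push_neg at h
    have hclosed : Closed Y' F₂ {a} :=
      singleton_closed P hsub t haY hac F₂ (hF₂set.trans (P.hmono h))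
    have hsub1 : comp Y' F₂ a ⊆ {a} := comp_min hclosed rfl
    have hle : (comp Y' F₂ a).ncard ≤ 1 := by
      have := Set.ncard_le_ncard hsub1 (Set.finite_singleton a)
      simpa using this
    omega
  have hD2 : Closed Y' F₂ (Y' ∩ clump P t) :=
    clump_closed P hsub t F₂ (hF₂set.trans (P.hmono hpt))
  have h2 : comp Y' F₂ a ⊆ Y' ∩ clump P t := comp_min hD2 ⟨haY, hac⟩
  have hcoh : ((P.H (uidx t + 1) : Subgroup G) : Set G) ⊆ (F₂ : Set G) := by
    intro g hg
    have hgJ : g ∈ ((P.H J : Subgroup G) : Set G) := P.hmono (by omega) hg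
    rw [hF₂, Finset.coe_union, Set.Finite.coe_toFinset]
    exact Or.inl hgJ
  have h3 : Y' ∩ clump P t ⊆ comp Y' F₂ a :=
    clump_cohesive P t F₂ hcoh (comp_closed haY) (mem_comp_self haY) hac
  have heqD : comp Y' F₂ a = Y' ∩ clump P t := Set.Subset.antisymm h2 h3
  refine ⟨uidx t, htS, ?_, ?_⟩
  · rw [← hcard, heqD]
    have h := Set.ncard_le_ncard (Set.inter_subset_right (s := Y')) (clump_fin P t)
    rw [clump_ncard P t] at h
    exact h
  · have h := hK₀ t htS ((le_max_left _ _).trans hpt)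
    rw [← heqD, hcard] at h
    exact h

lemma main_noneq {T S : Set ℕ}
    (hTS : ∀ n, ∃ i, i ∈ T ∧ i ∉ S ∧ n ≤ i) :
    ¬ CoarselyEquiv (XX P T) (XX P S) := by
  rintro ⟨Y, Y', ⟨hYsub, F₀, hYcov⟩, ⟨hY'sub, F₀', hY'cov⟩, f, hf⟩
  set c : ℕ := F₀.card + 1 with hc
  set c' : ℕ := F₀'.card + 1 with hc'
  obtain ⟨i, hiT, hiS, hin⟩ := hTS (2*c + c' + 2)
  have him : 2 * c ≤ mfun i := by
    have := mfun_ge i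
    omega
  obtain ⟨v, hspec, hvle, hvge⟩ := Llem P hYsub F₀ hYcov i hiT him
  have hspec' := SpecMem_transfer f hf hspec
  obtain ⟨j, hjS, hjv, hjv'⟩ := Ulem P hY'sub F₀' hY'cov hspec'
  have hji : j ≠ i := fun h => hiS (h ▸ hjS)
  rcases lt_or_gt_of_ne hji with hlt | hgt
  · obtain ⟨k, rfl⟩ : ∃ k, i = k + 1 := ⟨i - 1, by omega⟩
    have h1 : mfun j ≤ mfun k := mfun_mono (by omega)
    have h2 : mfun (k+1) ≤ c * mfun k := by
      calc mfun (k+1) ≤ c * v := hvge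
        _ ≤ c * mfun j := Nat.mul_le_mul_left c hjv
        _ ≤ c * mfun k := Nat.mul_le_mul_left c h1
    have h3 : mfun k * mfun k ≤ c * mfun k := by rw [← mfun_sq]; exact h2
    have h4 : mfun k ≤ c := Nat.le_of_mul_le_mul_right h3 (mfun_pos k)
    have h5 : k + 1 ≤ mfun k := mfun_ge k
    omega
  · have h1 : mfun (i+1) ≤ mfun j := mfun_mono (by omega)
    have h2 : mfun j ≤ c' * v := hjv'
    have h3 : c' * v ≤ c' * mfun i := Nat.mul_le_mul_left c' hvle
    have h4 : mfun i * mfun i ≤ c' * mfun i := by rw [← mfun_sq]; omega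
    have h5 : mfun i ≤ c' := Nat.le_of_mul_le_mul_right h4 (mfun_pos i)
    have h6 : i + 1 ≤ mfun i := mfun_ge i
    omega

lemma XX_ne {T S : Set ℕ} (hne : ∃ i, i ∈ T ∧ i ∉ S) : XX P T ≠ XX P S := by
  obtain ⟨i, hiT, hiS⟩ := hne
  set t : ℕ := Nat.pair i 0 with ht
  have hu : uidx t = i := by simp [uidx, ht]
  set j0 : Fin (mfun (uidx t)) := ⟨0, mfun_pos _⟩ with hj0
  set z : G := P.c (uidx t) j0 * P.x t with hz
  have hzc : z ∈ clump P t := ⟨P.c (uidx t) j0, ⟨j0, rfl⟩, rfl⟩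
  have hzT : z ∈ XX P T := (mem_XX P).2 ⟨t, by rw [hu]; exact hiT, hzc⟩
  have hzS : z ∉ XX P S := by
    intro hmem
    obtain ⟨t', ht'S, hz'⟩ := (mem_XX P).1 hmem
    by_cases hts : t' = t
    · subst hts
      rw [hu] at ht'S
      exact hiS ht'S
    · exact clump_disj P hts hz' hzc
  intro h
  exact hzS (h ▸ hzT)

end Clumps

section Family

noncomputable def codeSet (r : Set ℕ) : Set ℕ :=
  Set.range (fun n => Nat.pair n (Encodable.encode
    ((Finset.range n).filter (fun k => k ∈ r))))

lemma codeSet_infinite (r : Set ℕ) : (codeSet r).Infinite := by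
  apply Set.infinite_range_of_injective
  intro a b h
  have := congrArg (fun z => (Nat.unpair z).1) h
  simpa using this

lemma codeSet_inter_finite {r s : Set ℕ} (h : r ≠ s) :
    (codeSet r ∩ codeSet s).Finite := by
  have hk : ∃ k, ¬(k ∈ r ↔ k ∈ s) := by
    by_contra hcon
    push_neg at hcon
    exact h (Set.ext fun k => hcon k)
  obtain ⟨k, hk⟩ := hk
  have hsub : codeSet r ∩ codeSet s ⊆
      (fun n => Nat.pair n (Encodable.encode
        ((Finset.range n).filter (fun m => m ∈ r)))) '' (Set.Iic k) := by
    rintro z ⟨hzr, hzs⟩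
    obtain ⟨n, rfl⟩ := hzr
    obtain ⟨n', heq⟩ := hzs
    have h1 : n' = n := by
      have := congrArg (fun w => (Nat.unpair w).1) heq
      simpa using this
    subst h1
    have h2 : Encodable.encode ((Finset.range n').filter (fun m => m ∈ s)) =
        Encodable.encode ((Finset.range n').filter (fun m => m ∈ r)) := by
      have := congrArg (fun w => (Nat.unpair w).2) heq
      simpa using this
    have h3 : (Finset.range n').filter (fun m => m ∈ s) =
        (Finset.range n').filter (fun m => m ∈ r) :=
      Encodable.encode_injective h2
    have hnk : n' ≤ k := by
      by_contra hnk
      push_neg at hnk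
      apply hk
      constructor
      · intro hkr
        have hmem : k ∈ (Finset.range n').filter (fun m => m ∈ r) :=
          Finset.mem_filter.2 ⟨Finset.mem_range.2 hnk, hkr⟩
        rw [← h3] at hmem
        exact (Finset.mem_filter.1 hmem).2
      · intro hks
        have hmem : k ∈ (Finset.range n').filter (fun m => m ∈ s) :=
          Finset.mem_filter.2 ⟨Finset.mem_range.2 hnk, hks⟩
        rw [h3] at hmem
        exact (Finset.mem_filter.1 hmem).2
    exact ⟨n', hnk, rfl⟩
  exact ((Set.finite_Iic k).image _).subset hsub

lemma codeSet_hTS {r s : Set ℕ} (h : r ≠ s) :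
    ∀ n, ∃ i, i ∈ codeSet r ∧ i ∉ codeSet s ∧ n ≤ i := by
  intro n
  have hdiff : (codeSet r \ codeSet s).Infinite := by
    have h1 : (codeSet r \ (codeSet r ∩ codeSet s)).Infinite :=
      (codeSet_infinite r).diff (codeSet_inter_finite h)
    have h2 : codeSet r \ (codeSet r ∩ codeSet s) = codeSet r \ codeSet s := by
      ext z
      simp only [Set.mem_diff, Set.mem_inter_iff]
      tauto
    rwa [h2] at h1
  obtain ⟨i, hi, hni⟩ := hdiff.exists_notMem_finite (Set.finite_Iio n)
  refine ⟨i, hi.1, hi.2, ?_⟩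
  simpa using hni

end Family
end CC

theorem locally_finite_group_continuum_coarse_subsets
    (G : Type*) [Group G] [Countable G] [Infinite G]
    (hlf : ∀ S : Finset G, ((Subgroup.closure (S : Set G) : Subgroup G) : Set G).Finite) :
    ∃ 𝔉 : Set (Set G),
      Cardinal.mk 𝔉 = 2 ^ Cardinal.aleph0 ∧
      ∀ A ∈ 𝔉, ∀ B ∈ 𝔉, A ≠ B → ¬ CoarselyEquiv A B := by
  have hlf' : ∀ s : Set G, s.Finite → ((Subgroup.closure s : Subgroup G) : Set G).Finite := by
    intro s hs
    have := hlf hs.toFinset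
    rwa [Set.Finite.coe_toFinset] at this
  obtain ⟨P⟩ := CC.pack_nonempty hlf'
  refine ⟨Set.range (fun r : Set ℕ => CC.XX P (CC.codeSet r)), ?_, ?_⟩
  · have hinj : Function.Injective (fun r : Set ℕ => CC.XX P (CC.codeSet r)) := by
      intro r s h
      by_contra hrs
      obtain ⟨i, hiT, hiS, _⟩ := CC.codeSet_hTS hrs 0
      exact CC.XX_ne P ⟨i, hiT, hiS⟩ h
    have h := Cardinal.mk_range_eq_of_injective hinj
    rw [Cardinal.mk_set, Cardinal.mk_nat] at h
    simp only [Cardinal.lift_id', Cardinal.lift_power, Cardinal.lift_aleph0,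
      Cardinal.lift_two] at h
    exact h
  · rintro A ⟨r, rfl⟩ B ⟨s, rfl⟩ hne
    have hrs : r ≠ s := fun h => hne (by rw [h])
    exact CC.main_noneq P (CC.codeSet_hTS hrs)
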